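/- Let P_1 = |0⟩⟨1|, P_2 = |1⟩⟨0|, P_3 = |+⟩⟨−| in M_2(ℂ), and for d ≥ 1 let T = span{P_i ⊗ C : i ∈ {1,2,3}, C ∈ M_d(ℂ)} ⊆ M_{2d}(ℂ) (Kronecker products). Then the orthogonal complement of T with respect to the Hilbert–Schmidt inner product equals {I_2 ⊗ D : D ∈ M_d(ℂ)}, and this complement contains no nonzero rank-one matrix (every nonzero matrix of the form I_2 ⊗ D has rank at least 2). Hence T is an unextendible subspace spanned by rank-one matrices, and its orthogonal complement is completely entangled. -/

import Mathlib

open Matrix Kronecker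

/-- `|+⟩ = (|0⟩ + |1⟩)/√2`. -/
noncomputable def ketP : Fin 2 → ℂ := ![(Real.sqrt 2 : ℂ)⁻¹, (Real.sqrt 2 : ℂ)⁻¹]

/-- `|−⟩ = (|0⟩ − |1⟩)/√2`. -/
noncomputable def ketM : Fin 2 → ℂ := ![(Real.sqrt 2 : ℂ)⁻¹, -(Real.sqrt 2 : ℂ)⁻¹]

/-- `P_1 = |0⟩⟨1|`, `P_2 = |1⟩⟨0|`, `P_3 = |+⟩⟨−|` in `M_2(ℂ)`. -/
noncomputable def Pmat : Fin 3 → Matrix (Fin 2) (Fin 2) ℂ :=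
  ![single 0 1 1, single 1 0 1, vecMulVec ketP (star ketM)]

/-- The subspace `T = span {P_i ⊗ C : i ∈ {1,2,3}, C ∈ M_d(ℂ)} ⊆ M_{2d}(ℂ)`. -/
noncomputable def Tsub (d : ℕ) : Submodule ℂ (Matrix (Fin 2 × Fin d) (Fin 2 × Fin d) ℂ) :=
  Submodule.span ℂ {X : Matrix (Fin 2 × Fin d) (Fin 2 × Fin d) ℂ |
    ∃ (i : Fin 3) (C : Matrix (Fin d) (Fin d) ℂ), X = Pmat i ⊗ₖ C}

lemma trace_gen {d : ℕ} (P : Matrix (Fin 2) (Fin 2) ℂ)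
    (M : Matrix (Fin 2 × Fin d) (Fin 2 × Fin d) ℂ) (j i : Fin d) :
    ((P ⊗ₖ single j i (1:ℂ))ᴴ * M).trace
      = star (P 0 0) * M (0,j) (0,i) + star (P 1 0) * M (1,j) (0,i)
      + star (P 0 1) * M (0,j) (1,i) + star (P 1 1) * M (1,j) (1,i) := by
  simp only [Matrix.trace, Matrix.diag, Matrix.mul_apply, Matrix.conjTranspose_apply,
    Matrix.kroneckerMap_apply, Fintype.sum_prod_type, Matrix.single, Matrix.of_apply,
    star_mul', apply_ite, star_one, star_zero, ite_mul, one_mul, zero_mul, mul_ite, mul_zero,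
    mul_one, ite_and, Finset.sum_ite_eq, Finset.sum_ite_eq', Finset.mem_univ, if_true]
  simp only [Fin.sum_univ_two]
  simp [Finset.sum_add_distrib]
  ring

lemma sqrt2_inv_mul : ((Real.sqrt 2 : ℂ))⁻¹ * ((Real.sqrt 2 : ℂ))⁻¹ = 2⁻¹ := by
  rw [← mul_inv]
  norm_num [← Complex.ofReal_mul, Real.mul_self_sqrt]

lemma ortho_blocks {d : ℕ} (M : Matrix (Fin 2 × Fin d) (Fin 2 × Fin d) ℂ)
    (h : ∀ X ∈ Tsub d, (Xᴴ * M).trace = 0) :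
    (∀ j i, M (0,j) (1,i) = 0) ∧ (∀ j i, M (1,j) (0,i) = 0) ∧
    (∀ j i, M (0,j) (0,i) = M (1,j) (1,i)) := by
  have hg : ∀ (k : Fin 3) (j i : Fin d),
      ((Pmat k ⊗ₖ single j i (1:ℂ))ᴴ * M).trace = 0 := fun k j i =>
    h _ (Submodule.subset_span ⟨k, single j i 1, rfl⟩)
  have h1 : ∀ j i, M (0,j) (1,i) = 0 := by
    intro j i
    have := hg 0 j i
    rw [trace_gen] at this
    simpa [Pmat, single] using this
  have h2 : ∀ j i, M (1,j) (0,i) = 0 := by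
    intro j i
    have := hg 1 j i
    rw [trace_gen] at this
    simpa [Pmat, single] using this
  refine ⟨h1, h2, fun j i => ?_⟩
  have := hg 2 j i
  rw [trace_gen] at this
  have hP : Pmat 2 = vecMulVec ketP (star ketM) := rfl
  simp only [hP, vecMulVec_apply, ketP, ketM, Pi.star_apply, Matrix.cons_val_zero,
    Matrix.cons_val_one, Matrix.head_cons, star_mul', star_star, star_inv₀, star_neg,
    Complex.star_def, Complex.conj_ofReal, h1 j i, h2 j i, mul_zero, zero_mul,
    Matrix.cons_val_two, Matrix.vecHead, Matrix.vecTail] at this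
  rw [sqrt2_inv_mul] at this
  rw [mul_neg, sqrt2_inv_mul] at this
  have h2ne : (2:ℂ)⁻¹ ≠ 0 := by norm_num
  field_simp at this
  linear_combination this

lemma trace_Pmat (k : Fin 3) : (Pmat k).trace = 0 := by
  fin_cases k <;>
    simp [Pmat, Matrix.trace, Fin.sum_univ_two, Matrix.single, vecMulVec_apply,
      ketP, ketM, Complex.star_def, Complex.conj_ofReal] <;>
      simp [Matrix.diag, Complex.star_def, Complex.conj_ofReal]

lemma one_kron_orth {d : ℕ} (D : Matrix (Fin d) (Fin d) ℂ) :
    ∀ X ∈ Tsub d, (Xᴴ * ((1 : Matrix (Fin 2) (Fin 2) ℂ) ⊗ₖ D)).trace = 0 := by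
  intro X hX
  induction hX using Submodule.span_induction with
  | mem x hx =>
    obtain ⟨k, C, rfl⟩ := hx
    have hconj : (Pmat k ⊗ₖ C)ᴴ = (Pmat k)ᴴ ⊗ₖ Cᴴ := by
      ext ⟨a, i⟩ ⟨b, j⟩
      simp [Matrix.conjTranspose_apply, Matrix.kroneckerMap_apply, star_mul']
    rw [hconj, ← Matrix.mul_kronecker_mul, Matrix.trace_kronecker, Matrix.mul_one]
    have ht : ((Pmat k)ᴴ).trace = 0 := by
      rw [Matrix.trace_conjTranspose, trace_Pmat, star_zero]
    rw [ht, zero_mul]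
  | zero => simp
  | add x y _ _ hx hy => rw [Matrix.conjTranspose_add, Matrix.add_mul, Matrix.trace_add, hx, hy,
      add_zero]
  | smul c x _ hx => rw [Matrix.conjTranspose_smul, Matrix.smul_mul, Matrix.trace_smul, hx,
      smul_zero]

/-- the Hilbert–Schmidt orthogonal complement of `T` is `{I₂ ⊗ D}`;
every nonzero `I₂ ⊗ D` has rank at least 2 (so the complement is completely entangled);
hence `T` is unextendible: no nonzero rank-one matrix is orthogonal to `T`. -/
theorem stmt_17 (d : ℕ) (hd : 1 ≤ d) :
    ({M : Matrix (Fin 2 × Fin d) (Fin 2 × Fin d) ℂ |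
        ∀ X ∈ Tsub d, (Xᴴ * M).trace = 0} =
      {M : Matrix (Fin 2 × Fin d) (Fin 2 × Fin d) ℂ |
        ∃ D : Matrix (Fin d) (Fin d) ℂ, M = (1 : Matrix (Fin 2) (Fin 2) ℂ) ⊗ₖ D}) ∧
    (∀ D : Matrix (Fin d) (Fin d) ℂ, D ≠ 0 →
      2 ≤ ((1 : Matrix (Fin 2) (Fin 2) ℂ) ⊗ₖ D).rank) ∧
    (∀ ψ φ : Fin 2 × Fin d → ℂ,
      (∀ X ∈ Tsub d, (Xᴴ * vecMulVec ψ (star φ)).trace = 0) → ψ = 0 ∨ φ = 0) := by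
  refine ⟨?_, ?_, ?_⟩
  · ext M
    simp only [Set.mem_setOf_eq]
    constructor
    · intro h
      obtain ⟨h1, h2, h3⟩ := ortho_blocks M h
      refine ⟨Matrix.of fun j i => M (0, j) (0, i), ?_⟩
      ext ⟨a, j⟩ ⟨b, i⟩
      fin_cases a <;> fin_cases b <;>
        simp [Matrix.kroneckerMap_apply, Matrix.one_apply, h1, h2, h3 j i]
    · rintro ⟨D, rfl⟩
      exact one_kron_orth D
  · intro D hD
    have : ∃ j0 i0, D j0 i0 ≠ 0 := by
      by_contra hc
      push_neg at hc
      exact hD (by ext j i; exact hc j i)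
    obtain ⟨j0, i0, hji⟩ := this
    set A := (1 : Matrix (Fin 2) (Fin 2) ℂ) ⊗ₖ D with hA
    have hApp : ∀ (a b : Fin 2) (j i : Fin d),
        A (a, j) (b, i) = (1 : Matrix (Fin 2) (Fin 2) ℂ) a b * D j i := fun _ _ _ _ => rfl
    set v0 : (Fin 2 × Fin d) → ℂ := Aᵀ (0, i0) with hv0
    set v1 : (Fin 2 × Fin d) → ℂ := Aᵀ (1, i0) with hv1
    have hv00 : v0 (0, j0) = D j0 i0 := by
      simp [hv0, Matrix.transpose_apply, hApp, Matrix.one_apply]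
    have hv01 : ∀ j, v0 (1, j) = 0 := by
      intro j; simp [hv0, Matrix.transpose_apply, hApp, Matrix.one_apply]
    have hv11 : v1 (1, j0) = D j0 i0 := by
      simp [hv1, Matrix.transpose_apply, hApp, Matrix.one_apply]
    have hv0ne : v0 ≠ 0 := by
      intro hc
      rw [hc] at hv00
      exact hji (by simpa using hv00.symm)
    have hli : LinearIndependent ℂ ![v0, v1] := by
      rw [LinearIndependent.pair_iff' hv0ne]
      intro a hc
      have := congrFun hc (1, j0)
      rw [Pi.smul_apply, hv01 j0, hv11, smul_zero] at this
      exact hji this.symm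
    have hcard : Module.finrank ℂ (Submodule.span ℂ (Set.range ![v0, v1])) = 2 := by
      rw [finrank_span_eq_card hli]
      simp
    have hle : Submodule.span ℂ (Set.range ![v0, v1]) ≤ Submodule.span ℂ (Set.range Aᵀ) := by
      apply Submodule.span_mono
      rintro x ⟨k, rfl⟩
      fin_cases k
      · exact ⟨(0, i0), rfl⟩
      · exact ⟨(1, i0), rfl⟩
    rw [Matrix.rank_eq_finrank_span_cols]
    calc 2 = Module.finrank ℂ (Submodule.span ℂ (Set.range ![v0, v1])) := hcard.symm
      _ ≤ Module.finrank ℂ (Submodule.span ℂ (Set.range Aᵀ)) := Submodule.finrank_mono hle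
  · intro ψ φ h
    obtain ⟨h1, h2, h3⟩ := ortho_blocks _ h
    simp only [vecMulVec_apply, Pi.star_apply] at h1 h2 h3
    by_contra hc
    push_neg at hc
    obtain ⟨hψ, hφ⟩ := hc
    obtain ⟨⟨a, j0⟩, hpa⟩ := Function.ne_iff.mp hψ
    obtain ⟨⟨b, i0⟩, hpb⟩ := Function.ne_iff.mp hφ
    simp only [Pi.zero_apply] at hpa hpb
    fin_cases a
    · have hφ1 : ∀ i, φ (1, i) = 0 := by
        intro i
        have := h1 j0 i
        rcases mul_eq_zero.mp this with h | h
        · exact absurd h hpa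
        · simpa using h
      have hb0 : b = 0 := by
        fin_cases b
        · rfl
        · exact absurd (hφ1 i0) hpb
      subst hb0
      have := h3 j0 i0
      rw [hφ1 i0, star_zero, mul_zero] at this
      rcases mul_eq_zero.mp this with h | h
      · exact hpa h
      · exact hpb (by simpa using h)
    · have hφ0 : ∀ i, φ (0, i) = 0 := by
        intro i
        have := h2 j0 i
        rcases mul_eq_zero.mp this with h | h
        · exact absurd h hpa
        · simpa using h
      have hb1 : b = 1 := by
        fin_cases b
        · exact absurd (hφ0 i0) hpb
        · rfl
      subst hb1
      have := (h3 j0 i0).symm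
      rw [hφ0 i0, star_zero, mul_zero] at this
      rcases mul_eq_zero.mp this with h | h
      · exact hpa h
      · exact hpb (by simpa using h)
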